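/- Let k ≥ 2 and choose x : ZMod k → Bool uniformly at random (each coordinate an independent fair bit). Interpreting x(i) = true as node i of a k-cycle picking its 'forward' incident cycle edge and x(i) = false as picking its 'backward' edge, edge i is picked by both its endpoints exactly when x(i) = true and x(i+1) = false. Then the probability that at least one edge is picked by both endpoints, i.e. Pr[∃ i ∈ ZMod k, x(i) = true ∧ x(i+1) = false], equals 1 − 2^{1-k} (in particular it is at least 1 − 1/2^{k-1}). -/

import Mathlib

open Finset

/-- On a `k`-cycle (`k ≥ 2`) where each node `i ∈ ZMod k`
independently picks a uniform random bit `x i` (true = forward edge,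
false = backward edge), the probability that some edge is picked by both
of its endpoints, i.e. `∃ i, x i = true ∧ x (i+1) = false`, equals
`1 - 2^(1-k)`. -/
theorem stmt11 (k : ℕ) (hk : 2 ≤ k) [NeZero k] :
    (((Finset.univ : Finset (ZMod k → Bool)).filter
        (fun x => ∃ i : ZMod k, x i = true ∧ x (i + 1) = false)).card : ℚ) /
      ((Finset.univ : Finset (ZMod k → Bool)).card : ℚ)
      = 1 - (2 : ℚ) ^ ((1 : ℤ) - (k : ℤ)) := by
  classical
  have hcardu : (Finset.univ : Finset (ZMod k → Bool)).card = 2 ^ k := by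
    simp [card_univ]
  have hset : (Finset.univ.filter
      (fun x : ZMod k → Bool => ¬ ∃ i, x i = true ∧ x (i + 1) = false))
      = {fun _ => true, fun _ => false} := by
    ext x
    simp only [mem_filter, mem_univ, true_and, mem_insert, mem_singleton]
    constructor
    · intro h
      push_neg at h
      by_cases hx : ∃ i, x i = true
      · left
        obtain ⟨i, hi⟩ := hx
        have step : ∀ n : ℕ, x (i + n) = true := by
          intro n
          induction n with
          | zero => simpa using hi
          | succ n ih =>
            have h2 := h (i + n) ih
            rw [Bool.ne_false_iff] at h2
            have : ((n + 1 : ℕ) : ZMod k) = (n : ZMod k) + 1 := by push_cast; ring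
            rw [this, ← add_assoc]
            exact h2
        funext j
        have := step (j - i).val
        rwa [ZMod.natCast_val, ZMod.cast_id, add_sub_cancel] at this
      · right
        push_neg at hx
        funext j
        simpa using hx j
    · rintro (rfl | rfl) <;> simp
  have hcompl : (Finset.univ.filter
      (fun x : ZMod k → Bool => ¬ ∃ i, x i = true ∧ x (i + 1) = false)).card = 2 := by
    rw [hset, card_insert_of_notMem, card_singleton]
    simp only [mem_singleton]
    intro h
    have := congrFun h 0
    simp at this
  have hsum := card_filter_add_card_filter_not
    (s := (Finset.univ : Finset (ZMod k → Bool)))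
    (p := fun x => ∃ i : ZMod k, x i = true ∧ x (i + 1) = false)
  rw [hcompl, hcardu] at hsum
  have hfc : ((Finset.univ : Finset (ZMod k → Bool)).filter
      (fun x => ∃ i : ZMod k, x i = true ∧ x (i + 1) = false)).card = 2 ^ k - 2 := by
    exact Nat.eq_sub_of_add_eq hsum
  rw [hfc, hcardu]
  have h2k : (2:ℕ) ≤ 2 ^ k := by
    calc (2:ℕ) = 2 ^ 1 := rfl
    _ ≤ 2 ^ k := Nat.pow_le_pow_right (by norm_num) (le_trans one_le_two hk)
  have hcast : ((2 ^ k - 2 : ℕ) : ℚ) = 2 ^ k - 2 := by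
    push_cast [Nat.cast_sub h2k]; ring
  rw [hcast]
  have hz : (2:ℚ) ^ ((1:ℤ) - (k:ℤ)) = 2 / 2 ^ k := by
    rw [zpow_sub₀ (by norm_num : (2:ℚ) ≠ 0)]
    norm_num [zpow_natCast]
  rw [hz]
  have h0 : ((2:ℚ)^k : ℚ) ≠ 0 := by positivity
  field_simp
  push_cast
  ring
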